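/- Let L : ℝ^{n₁} × ℝ^{n₂} → ℝ be differentiable and invariant under all α-scale transformations (L(αu, α⁻¹v) = L(u, v) for all α > 0). Then for every θ = (θ₁, θ₂) and every α > 0, the squared norm of the gradient of L at (αθ₁, α⁻¹θ₂) equals α⁻²‖∇_{θ₁}L(θ₁, θ₂)‖₂² + α²‖∇_{θ₂}L(θ₁, θ₂)‖₂², where ∇_{θ₁}L and ∇_{θ₂}L denote the gradients with respect to the first and second components. -/

import Mathlib

/-- The parameter space `ℝ^{n₁} × ℝ^{n₂}` with the Euclidean (`ℓ²`) norm on the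
concatenated vector. -/
abbrev Param (n₁ n₂ : ℕ) :=
  WithLp 2 (EuclideanSpace ℝ (Fin n₁) × EuclideanSpace ℝ (Fin n₂))

/-- Builds a parameter from its two components. -/
noncomputable def Param.mk {n₁ n₂ : ℕ}
    (u : EuclideanSpace ℝ (Fin n₁)) (v : EuclideanSpace ℝ (Fin n₂)) :
    Param n₁ n₂ :=
  (WithLp.equiv 2 (EuclideanSpace ℝ (Fin n₁) × EuclideanSpace ℝ (Fin n₂))).symm (u, v)

open InnerProductSpace

theorem grad_inner {E : Type*} [NormedAddCommGroup E] [InnerProductSpace ℝ E] [CompleteSpace E]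
    (f : E → ℝ) (x y : E) :
    ⟪gradient f x, y⟫_ℝ = fderiv ℝ f x y := by
  rw [gradient, toDual_symm_apply]

theorem gradient_norm_sq_alpha_scale (n₁ n₂ : ℕ) (L : Param n₁ n₂ → ℝ)
    (hdiff : Differentiable ℝ L)
    (hinv : ∀ α : ℝ, 0 < α → ∀ (u : EuclideanSpace ℝ (Fin n₁))
      (v : EuclideanSpace ℝ (Fin n₂)),
      L (Param.mk (α • u) (α⁻¹ • v)) = L (Param.mk u v))
    (θ₁ : EuclideanSpace ℝ (Fin n₁)) (θ₂ : EuclideanSpace ℝ (Fin n₂))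
    (α : ℝ) (hα : 0 < α) :
    ‖gradient L (Param.mk (α • θ₁) (α⁻¹ • θ₂))‖ ^ 2 =
      α⁻¹ ^ 2 * ‖gradient (fun u => L (Param.mk u θ₂)) θ₁‖ ^ 2 +
      α ^ 2 * ‖gradient (fun v => L (Param.mk θ₁ v)) θ₂‖ ^ 2 := by
  set e := (WithLp.prodContinuousLinearEquiv 2 ℝ
    (EuclideanSpace ℝ (Fin n₁)) (EuclideanSpace ℝ (Fin n₂))).symm with he
  set j₁ : EuclideanSpace ℝ (Fin n₁) →L[ℝ] Param n₁ n₂ :=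
    (e : _ →L[ℝ] Param n₁ n₂).comp
      (ContinuousLinearMap.inl ℝ (EuclideanSpace ℝ (Fin n₁)) (EuclideanSpace ℝ (Fin n₂))) with hj₁
  set j₂ : EuclideanSpace ℝ (Fin n₂) →L[ℝ] Param n₁ n₂ :=
    (e : _ →L[ℝ] Param n₁ n₂).comp
      (ContinuousLinearMap.inr ℝ (EuclideanSpace ℝ (Fin n₁)) (EuclideanSpace ℝ (Fin n₂))) with hj₂
  -- derivative of the embeddings
  have hemb1 : ∀ (v : EuclideanSpace ℝ (Fin n₂)) (p : EuclideanSpace ℝ (Fin n₁)),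
      HasFDerivAt (fun u => Param.mk u v) j₁ p := by
    intro v p
    have h1 : HasFDerivAt (fun u : EuclideanSpace ℝ (Fin n₁) => (u, v))
        (ContinuousLinearMap.inl ℝ (EuclideanSpace ℝ (Fin n₁)) (EuclideanSpace ℝ (Fin n₂))) p :=
      (hasFDerivAt_id p).prodMk (hasFDerivAt_const v p)
    exact (e.toContinuousLinearMap.hasFDerivAt.comp p h1 : _)
  have hemb2 : ∀ (u : EuclideanSpace ℝ (Fin n₁)) (p : EuclideanSpace ℝ (Fin n₂)),
      HasFDerivAt (fun v => Param.mk u v) j₂ p := by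
    intro u p
    have h1 : HasFDerivAt (fun v : EuclideanSpace ℝ (Fin n₂) => (u, v))
        (ContinuousLinearMap.inr ℝ (EuclideanSpace ℝ (Fin n₁)) (EuclideanSpace ℝ (Fin n₂))) p :=
      (hasFDerivAt_const u p).prodMk (hasFDerivAt_id p)
    exact (e.toContinuousLinearMap.hasFDerivAt.comp p h1 : _)
  set x := Param.mk θ₁ θ₂ with hx
  set xα := Param.mk (α • θ₁) (α⁻¹ • θ₂) with hxα
  set G := gradient L xα with hG
  set G₁ := gradient (fun u => L (Param.mk u θ₂)) θ₁ with hG₁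
  set G₂ := gradient (fun v => L (Param.mk θ₁ v)) θ₂ with hG₂
  -- fderiv of partial maps
  have hpart1 : ∀ w, ⟪G₁, w⟫_ℝ = fderiv ℝ L x (j₁ w) := by
    intro w
    rw [hG₁, grad_inner]
    have : HasFDerivAt (fun u => L (Param.mk u θ₂)) ((fderiv ℝ L x).comp j₁) θ₁ :=
      ((hdiff x).hasFDerivAt).comp θ₁ (hemb1 θ₂ θ₁)
    rw [this.fderiv]; rfl
  have hpart2 : ∀ w, ⟪G₂, w⟫_ℝ = fderiv ℝ L x (j₂ w) := by
    intro w
    rw [hG₂, grad_inner]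
    have : HasFDerivAt (fun v => L (Param.mk θ₁ v)) ((fderiv ℝ L x).comp j₂) θ₂ :=
      ((hdiff x).hasFDerivAt).comp θ₂ (hemb2 θ₁ θ₂)
    rw [this.fderiv]; rfl
  -- invariance derivative in first component
  have hinv1 : ∀ w, α * fderiv ℝ L xα (j₁ w) = fderiv ℝ L x (j₁ w) := by
    intro w
    have hfun : (fun u : EuclideanSpace ℝ (Fin n₁) => L (Param.mk (α • u) (α⁻¹ • θ₂))) =
        (fun u => L (Param.mk u θ₂)) := funext fun u => hinv α hα u θ₂
    have hsc : HasFDerivAt (fun u : EuclideanSpace ℝ (Fin n₁) => α • u)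
        (α • ContinuousLinearMap.id ℝ _) θ₁ := (hasFDerivAt_id θ₁).const_smul α
    have hL : HasFDerivAt (fun u : EuclideanSpace ℝ (Fin n₁) => L (Param.mk (α • u) (α⁻¹ • θ₂)))
        (((fderiv ℝ L xα).comp j₁).comp (α • ContinuousLinearMap.id ℝ _)) θ₁ := by
      have h1 : HasFDerivAt (fun z => L (Param.mk z (α⁻¹ • θ₂)))
          ((fderiv ℝ L xα).comp j₁) (α • θ₁) :=
        ((hdiff xα).hasFDerivAt).comp (α • θ₁) (hemb1 (α⁻¹ • θ₂) (α • θ₁))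
      exact h1.comp θ₁ hsc
    have hR : HasFDerivAt (fun u => L (Param.mk u θ₂)) ((fderiv ℝ L x).comp j₁) θ₁ :=
      ((hdiff x).hasFDerivAt).comp θ₁ (hemb1 θ₂ θ₁)
    have heq := (hfun ▸ hL).fderiv.symm.trans hR.fderiv
    have happ := DFunLike.congr_fun heq w
    simpa [mul_comm] using happ
  have hinv2 : ∀ w, α⁻¹ * fderiv ℝ L xα (j₂ w) = fderiv ℝ L x (j₂ w) := by
    intro w
    have hfun : (fun v : EuclideanSpace ℝ (Fin n₂) => L (Param.mk (α • θ₁) (α⁻¹ • v))) =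
        (fun v => L (Param.mk θ₁ v)) := funext fun v => hinv α hα θ₁ v
    have hsc : HasFDerivAt (fun v : EuclideanSpace ℝ (Fin n₂) => α⁻¹ • v)
        (α⁻¹ • ContinuousLinearMap.id ℝ _) θ₂ := (hasFDerivAt_id θ₂).const_smul α⁻¹
    have hL : HasFDerivAt (fun v : EuclideanSpace ℝ (Fin n₂) => L (Param.mk (α • θ₁) (α⁻¹ • v)))
        (((fderiv ℝ L xα).comp j₂).comp (α⁻¹ • ContinuousLinearMap.id ℝ _)) θ₂ := by
      have h1 : HasFDerivAt (fun z => L (Param.mk (α • θ₁) z))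
          ((fderiv ℝ L xα).comp j₂) (α⁻¹ • θ₂) :=
        ((hdiff xα).hasFDerivAt).comp (α⁻¹ • θ₂) (hemb2 (α • θ₁) (α⁻¹ • θ₂))
      exact h1.comp θ₂ hsc
    have hR : HasFDerivAt (fun v => L (Param.mk θ₁ v)) ((fderiv ℝ L x).comp j₂) θ₂ :=
      ((hdiff x).hasFDerivAt).comp θ₂ (hemb2 θ₁ θ₂)
    have heq := (hfun ▸ hL).fderiv.symm.trans hR.fderiv
    have happ := DFunLike.congr_fun heq w
    simpa [mul_comm] using happ
  -- components of G
  have hfst : G.fst = α⁻¹ • G₁ := by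
    refine ext_inner_right ℝ fun w => ?_
    have hjw : j₁ w = (WithLp.equiv 2 _).symm (w, (0 : EuclideanSpace ℝ (Fin n₂))) := rfl
    have h1 : ⟪G, j₁ w⟫_ℝ = ⟪G.fst, w⟫_ℝ := by
      rw [hjw, WithLp.prod_inner_apply, WithLp.equiv_symm_apply, WithLp.ofLp_toLp]
      simp
      rfl
    have h2 : ⟪G, j₁ w⟫_ℝ = fderiv ℝ L xα (j₁ w) := grad_inner L xα (j₁ w)
    rw [← h1, h2, real_inner_smul_left, hpart1 w, ← hinv1 w]
    field_simp
  have hsnd : G.snd = α • G₂ := by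
    refine ext_inner_right ℝ fun w => ?_
    have hjw : j₂ w = (WithLp.equiv 2 _).symm ((0 : EuclideanSpace ℝ (Fin n₁)), w) := rfl
    have h1 : ⟪G, j₂ w⟫_ℝ = ⟪G.snd, w⟫_ℝ := by
      rw [hjw, WithLp.prod_inner_apply, WithLp.equiv_symm_apply, WithLp.ofLp_toLp]
      simp
      rfl
    have h2 : ⟪G, j₂ w⟫_ℝ = fderiv ℝ L xα (j₂ w) := grad_inner L xα (j₂ w)
    rw [← h1, h2, real_inner_smul_left, hpart2 w, ← hinv2 w]
    field_simp
  rw [WithLp.prod_norm_sq_eq_of_L2, hfst, hsnd, norm_smul, norm_smul, mul_pow, mul_pow,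
    Real.norm_eq_abs, Real.norm_eq_abs, abs_of_pos hα, abs_of_pos (inv_pos.mpr hα)]
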